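/- For every x ∈ ℝⁿ, w₀(x) = 1/n if and only if w_{n-1}(x) = n. -/

import Mathlib

set_option linter.unusedSectionVars false
set_option linter.unusedVariables false


open Real MeasureTheory Filter Set

/-- Distance from a real number to the nearest integer. -/
noncomputable def dnint (t : ℝ) : ℝ := |t - round t|

/-- `‖y‖`: max over coordinates of the distance to the nearest integer. -/
noncomputable def vnorm {n : ℕ} (y : Fin n → ℝ) : ℝ := ⨆ i, dnint (y i)

/-- Supremum norm of an integer vector, as a real number. -/
noncomputable def isupnorm {n : ℕ} (q : Fin n → ℤ) : ℝ := ⨆ i, |(q i : ℝ)|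

lemma dnint_nonneg (t : ℝ) : 0 ≤ dnint t := abs_nonneg _

lemma dnint_le_half (t : ℝ) : dnint t ≤ 1/2 := by
  have := abs_sub_round t; rw [dnint]; linarith

lemma dnint_le (t : ℝ) (k : ℤ) : dnint t ≤ |t - k| := by
  rcases eq_or_ne k (round t) with rfl | hk
  · exact le_of_eq rfl
  · have h1 : (1 : ℝ) ≤ |(round t : ℝ) - k| := by
      have : round t - k ≠ 0 := sub_ne_zero.mpr (Ne.symm hk)
      have : (1 : ℤ) ≤ |round t - k| := Int.one_le_abs this
      calc (1:ℝ) = ((1:ℤ):ℝ) := by norm_num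
        _ ≤ ((|round t - k| : ℤ) : ℝ) := by exact_mod_cast this
        _ = |(round t : ℝ) - k| := by push_cast [abs_sub_comm]; rw [abs_sub_comm]
    have h2 : |(round t : ℝ) - k| ≤ |t - round t| + |t - k| := by
      have := abs_sub_abs_le_abs_sub ((round t : ℝ) - k) (t - k)
      calc |(round t:ℝ) - k| = |(t - k) - (t - round t)| := by ring_nf
        _ ≤ |t - k| + |t - round t| := abs_sub _ _
        _ = |t - round t| + |t - k| := by ring
    have h3 := dnint_le_half t
    rw [dnint] at *; linarith

lemma dnint_intCast (k : ℤ) : dnint (k : ℝ) = 0 := by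
  simp [dnint]

lemma dnint_eq_zero_iff {t : ℝ} : dnint t = 0 ↔ ∃ k : ℤ, t = k := by
  constructor
  · intro h
    exact ⟨round t, by rwa [dnint, abs_eq_zero, sub_eq_zero] at h⟩
  · rintro ⟨k, rfl⟩; exact dnint_intCast k

lemma dnint_int_mul_le (k : ℤ) (t : ℝ) : dnint (k * t) ≤ |(k:ℝ)| * dnint t := by
  calc dnint (k * t) ≤ |k * t - (k * round t : ℤ)| := dnint_le _ _
    _ = |(k:ℝ)| * |t - round t| := by push_cast; rw [← abs_mul]; ring_nf
    _ = |(k:ℝ)| * dnint t := rfl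

lemma dnint_nat_mul_le (k : ℕ) (t : ℝ) : dnint (k * t) ≤ k * dnint t := by
  have := dnint_int_mul_le (k : ℤ) t
  simpa using this

/- ### Basic lemmas on vnorm / isupnorm -/

section n
variable {n : ℕ}

lemma dnint_le_vnorm [NeZero n] (y : Fin n → ℝ) (i : Fin n) : dnint (y i) ≤ vnorm y :=
  le_ciSup (f := fun i => dnint (y i)) (Finite.bddAbove_range _) i

lemma vnorm_le [NeZero n] {y : Fin n → ℝ} {c : ℝ} (h : ∀ i, dnint (y i) ≤ c) : vnorm y ≤ c :=
  ciSup_le h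

lemma vnorm_nonneg [NeZero n] (y : Fin n → ℝ) : 0 ≤ vnorm y :=
  le_trans (dnint_nonneg _) (dnint_le_vnorm y ⟨0, Nat.pos_of_ne_zero (NeZero.ne n)⟩)

lemma vnorm_lt [NeZero n] {y : Fin n → ℝ} {c : ℝ} (h : ∀ i, dnint (y i) < c) : vnorm y < c := by
  obtain ⟨i₀, hi₀⟩ := Finite.exists_max (fun i => dnint (y i))
  exact lt_of_le_of_lt (ciSup_le hi₀) (h i₀)

lemma vnorm_eq_zero [NeZero n] {y : Fin n → ℝ} (h : ∀ i, dnint (y i) = 0) : vnorm y = 0 := by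
  have : vnorm y ≤ 0 := vnorm_le (fun i => le_of_eq (h i))
  exact le_antisymm this (vnorm_nonneg y)

lemma abs_le_isupnorm [NeZero n] (q : Fin n → ℤ) (i : Fin n) : |(q i : ℝ)| ≤ isupnorm q :=
  le_ciSup (f := fun i => |(q i : ℝ)|) (Finite.bddAbove_range _) i

lemma isupnorm_le [NeZero n] {q : Fin n → ℤ} {c : ℝ} (h : ∀ i, |(q i : ℝ)| ≤ c) : isupnorm q ≤ c :=
  ciSup_le h

lemma one_le_isupnorm [NeZero n] {q : Fin n → ℤ} (hq : q ≠ 0) : 1 ≤ isupnorm q := by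
  obtain ⟨i, hi⟩ := Function.ne_iff.mp hq
  refine le_trans ?_ (abs_le_isupnorm q i)
  have : (1 : ℤ) ≤ |q i| := Int.one_le_abs hi
  calc (1:ℝ) = ((1:ℤ):ℝ) := by norm_num
    _ ≤ ((|q i| : ℤ) : ℝ) := by exact_mod_cast this
    _ = |(q i : ℝ)| := by push_cast; ring

lemma exists_isupnorm_max [NeZero n] (q : Fin n → ℤ) :
    ∃ j, isupnorm q = |(q j : ℝ)| ∧ ∀ i, |q i| ≤ |q j| := by
  obtain ⟨j, hj⟩ := Finite.exists_max (fun i => |q i|)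
  refine ⟨j, le_antisymm (isupnorm_le fun i => ?_) (abs_le_isupnorm q j), hj⟩
  calc |(q i : ℝ)| = ((|q i| : ℤ) : ℝ) := by push_cast; ring
    _ ≤ ((|q j| : ℤ) : ℝ) := by exact_mod_cast hj i
    _ = |(q j : ℝ)| := by push_cast; ring

end n

/-- The simultaneous Diophantine exponent
`w₀(x) = sup {w : ‖q x‖ < q^{-w} for infinitely many q ∈ ℕ}`. -/
noncomputable def wsim (n : ℕ) (x : Fin n → ℝ) : EReal :=
  sSup {w : EReal | ∃ v : ℝ, w = (v : EReal) ∧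
    {q : ℕ | 0 < q ∧ vnorm (fun i => (q : ℝ) * x i) < (q : ℝ) ^ (-v)}.Infinite}

/-- The dual Diophantine exponent
`w_{n-1}(x) = sup {w : ‖q.x‖ < |q|^{-w} for infinitely many q ∈ ℤⁿ \ {0}}`. -/
noncomputable def wdual (n : ℕ) (x : Fin n → ℝ) : EReal :=
  sSup {w : EReal | ∃ v : ℝ, w = (v : EReal) ∧
    {q : Fin n → ℤ | q ≠ 0 ∧
      dnint (∑ i, (q i : ℝ) * x i) < isupnorm q ^ (-v)}.Infinite}

/- ### The solution sets -/

def Ssim (n : ℕ) (x : Fin n → ℝ) (v : ℝ) : Set ℕ :=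
  {q : ℕ | 0 < q ∧ vnorm (fun i => (q : ℝ) * x i) < (q : ℝ) ^ (-v)}

def Sdual (n : ℕ) (x : Fin n → ℝ) (v : ℝ) : Set (Fin n → ℤ) :=
  {q : Fin n → ℤ | q ≠ 0 ∧ dnint (∑ i, (q i : ℝ) * x i) < isupnorm q ^ (-v)}

lemma wsim_eq (n : ℕ) (x : Fin n → ℝ) :
    wsim n x = sSup {w : EReal | ∃ v : ℝ, w = (v : EReal) ∧ (Ssim n x v).Infinite} := rfl

lemma wdual_eq (n : ℕ) (x : Fin n → ℝ) :
    wdual n x = sSup {w : EReal | ∃ v : ℝ, w = (v : EReal) ∧ (Sdual n x v).Infinite} := rfl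

/- ### Generic infinitude infrastructure -/

lemma fiber_or {α : Type*} (f : ℕ → α) (S : Set α) (hf : ∀ N, f N ∈ S) :
    S.Infinite ∨ ∃ a ∈ S, {N | f N = a}.Infinite := by
  by_cases h : (Set.range f).Finite
  · right
    haveI : Finite (Set.range f) := h
    obtain ⟨y, hy⟩ := Finite.exists_infinite_fiber (Set.rangeFactorization f)
    refine ⟨(y : α), ?_, ?_⟩
    · obtain ⟨N, hN⟩ := y.2; exact hN ▸ hf N
    · rw [← Set.infinite_coe_iff]
      have he : {N | f N = (y : α)} = Set.rangeFactorization f ⁻¹' {y} := by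
        ext N; simp [Set.rangeFactorization, Subtype.ext_iff]
      rw [he]; exact hy
  · left
    have hinf : (Set.range f).Infinite := h
    exact hinf.mono (Set.range_subset_iff.mpr hf)

/- degenerate cases -/

lemma Ssim_infinite_of_deg {n : ℕ} [NeZero n] {x : Fin n → ℝ} {t : ℕ} (ht : 0 < t)
    (h0 : ∀ i, dnint (t * x i) = 0) (v : ℝ) : (Ssim n x v).Infinite := by
  refine Set.infinite_of_injective_forall_mem (f := fun k : ℕ => (k + 1) * t) ?_ ?_
  · intro k l hkl
    simp only at hkl
    have := Nat.eq_of_mul_eq_mul_right ht hkl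
    omega
  · intro k
    refine ⟨by positivity, ?_⟩
    have hpos : (0:ℝ) < (((k+1)*t : ℕ) : ℝ) ^ (-v) := by
      apply Real.rpow_pos_of_pos; positivity
    refine lt_of_le_of_lt (le_of_eq (vnorm_eq_zero fun i => ?_)) hpos
    have he : (((k+1)*t : ℕ) : ℝ) * x i = ((k+1 : ℕ) : ℝ) * ((t : ℝ) * x i) := by push_cast; ring
    rw [he]
    have h1 := dnint_nat_mul_le (k+1) ((t:ℝ) * x i)
    have h2 := dnint_nonneg ((((k+1) : ℕ) : ℝ) * ((t:ℝ) * x i))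
    rw [h0 i, mul_zero] at h1
    linarith

lemma Sdual_infinite_of_deg {n : ℕ} [NeZero n] {x : Fin n → ℝ} {a : Fin n → ℤ} (ha : a ≠ 0)
    (h0 : dnint (∑ i, (a i : ℝ) * x i) = 0) (w : ℝ) : (Sdual n x w).Infinite := by
  obtain ⟨i₀, hi₀⟩ := Function.ne_iff.mp ha
  simp only [Pi.zero_apply] at hi₀
  refine Set.infinite_of_injective_forall_mem
    (f := fun k : ℕ => fun i => ((k:ℤ) + 1) * a i) ?_ ?_
  · intro k l hkl
    have h' := congrFun hkl i₀
    simp only at h'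
    have : (k:ℤ) + 1 = (l:ℤ) + 1 := mul_right_cancel₀ hi₀ h'
    exact_mod_cast by omega
  · intro k
    have hne : (fun i => ((k:ℤ) + 1) * a i) ≠ 0 := by
      intro h
      have h' := congrFun h i₀
      simp only [Pi.zero_apply, mul_eq_zero] at h'
      rcases h' with h' | h'
      · omega
      · exact hi₀ h'
    refine ⟨hne, ?_⟩
    have hpos : (0:ℝ) < isupnorm (fun i => ((k:ℤ)+1) * a i) ^ (-w) :=
      Real.rpow_pos_of_pos (lt_of_lt_of_le one_pos (one_le_isupnorm hne)) _
    refine lt_of_le_of_lt ?_ hpos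
    have he : ∑ i, ((((k:ℤ)+1) * a i : ℤ) : ℝ) * x i = ((k+1 : ℕ) : ℝ) * ∑ i, (a i : ℝ) * x i := by
      rw [Finset.mul_sum]; congr 1; ext i; push_cast; ring
    rw [he]
    have h1 := dnint_nat_mul_le (k+1) (∑ i, (a i : ℝ) * x i)
    rw [h0, mul_zero] at h1
    exact h1

/- finiteness of bounded integer vectors -/

lemma finite_isupnorm_le (n : ℕ) [NeZero n] (C : ℝ) : {a : Fin n → ℤ | isupnorm a ≤ C}.Finite := by
  have h : {a : Fin n → ℤ | isupnorm a ≤ C} ⊆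
      Set.pi Set.univ (fun _ : Fin n => {m : ℤ | |(m : ℝ)| ≤ C}) := by
    intro a ha i _
    exact le_trans (abs_le_isupnorm a i) ha
  refine Set.Finite.subset (Set.Finite.pi fun i => ?_) h
  have h2 : {m : ℤ | |(m:ℝ)| ≤ C} ⊆ Set.Icc (-⌈C⌉) ⌈C⌉ := by
    intro m hm
    simp only [Set.mem_setOf_eq] at hm
    have hm1 : (m:ℝ) ≤ C := le_trans (le_abs_self _) hm
    have hm2 : -C ≤ (m:ℝ) := neg_le_of_abs_le hm
    constructor
    · have : -(⌈C⌉:ℝ) ≤ (m:ℝ) := le_trans (neg_le_neg (Int.le_ceil C)) hm2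
      exact_mod_cast this
    · have : (m:ℝ) ≤ (⌈C⌉:ℝ) := le_trans hm1 (Int.le_ceil C)
      exact_mod_cast this
  exact Set.Finite.subset (Set.finite_Icc _ _) h2

lemma exists_isupnorm_gt {n : ℕ} [NeZero n] {S : Set (Fin n → ℤ)} (hS : S.Infinite) (C : ℝ) :
    ∃ a ∈ S, C < isupnorm a := by
  by_contra h
  push_neg at h
  exact hS (Set.Finite.subset (finite_isupnorm_le n C) h)

/- ### Pigeonhole bins -/

lemma bin_lt (r : ℝ) {K : ℕ} (hK : 0 < K) : (⌊Int.fract r * K⌋).toNat < K := by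
  have h1 : Int.fract r * K < K := by
    have := Int.fract_lt_one r
    calc Int.fract r * K < 1 * K := by
          apply mul_lt_mul_of_pos_right this; exact_mod_cast hK
      _ = K := one_mul _
  have h2 : ⌊Int.fract r * K⌋ < (K:ℤ) := Int.floor_lt.mpr (by exact_mod_cast h1)
  omega

lemma dist_lt_of_bin_eq {r s : ℝ} {K : ℕ} (hK : 0 < K)
    (h : ⌊Int.fract r * K⌋ = ⌊Int.fract s * K⌋) : |Int.fract r - Int.fract s| < 1 / K := by
  have h1 : |Int.fract r * K - Int.fract s * K| < 1 := Int.abs_sub_lt_one_of_floor_eq_floor h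
  have hKpos : (0:ℝ) < K := by exact_mod_cast hK
  rw [show Int.fract r * K - Int.fract s * K = (Int.fract r - Int.fract s) * K by ring,
    abs_mul, abs_of_pos hKpos] at h1
  rw [lt_div_iff₀ hKpos]
  exact h1
/- ### small-values-infinitely-often forces zero -/

lemma eq_zero_of_infinite_small {V : ℝ} (hV : 0 ≤ V) {s : Set ℕ} (hs : s.Infinite)
    (h : ∀ N ∈ s, V < 1/((N:ℝ)+1)) : V = 0 := by
  refine le_antisymm ?_ hV
  by_contra h'
  push_neg at h'
  obtain ⟨N, hN, hNg⟩ := hs.exists_gt ⌈1/V⌉₊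
  have h1 := h N hN
  have h2 : 1/V ≤ (⌈1/V⌉₊ : ℝ) := Nat.le_ceil _
  have h3 : (⌈1/V⌉₊ : ℝ) < (N:ℝ) + 1 := by exact_mod_cast Nat.lt_succ_of_lt hNg
  have h4 : 1/V < (N:ℝ)+1 := lt_of_le_of_lt h2 h3
  have h5 : 1/((N:ℝ)+1) < V := by
    rw [div_lt_iff₀ (by positivity)]
    rw [div_lt_iff₀ h'] at h4
    linarith
  linarith

section main
variable {n : ℕ} [NeZero n] (x : Fin n → ℝ)

/- ### Dirichlet, simultaneous -/

lemma dirichlet_sim_step {N : ℕ} (hN : 0 < N) {u v : ℕ} (huv : v < u)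
    (hb : ∀ i, ⌊Int.fract ((u:ℝ) * x i) * N⌋ = ⌊Int.fract ((v:ℝ) * x i) * N⌋) :
    ∀ i, dnint (((u - v : ℕ):ℝ) * x i) < 1/N := by
  intro i
  have key : ((u - v : ℕ):ℝ) * x i - ((⌊(u:ℝ) * x i⌋ - ⌊(v:ℝ) * x i⌋ : ℤ) : ℝ)
      = Int.fract ((u:ℝ) * x i) - Int.fract ((v:ℝ) * x i) := by
    rw [Int.fract, Int.fract]
    push_cast [Nat.cast_sub huv.le]
    ring
  calc dnint (((u - v : ℕ):ℝ) * x i)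
      ≤ |((u - v : ℕ):ℝ) * x i - ((⌊(u:ℝ) * x i⌋ - ⌊(v:ℝ) * x i⌋ : ℤ) : ℝ)| := dnint_le _ _
    _ = |Int.fract ((u:ℝ) * x i) - Int.fract ((v:ℝ) * x i)| := by rw [key]
    _ < 1/N := dist_lt_of_bin_eq hN (hb i)

lemma dirichlet_sim {N : ℕ} (hN : 0 < N) :
    ∃ q : ℕ, 0 < q ∧ q ≤ N^n ∧ ∀ i, dnint ((q:ℝ) * x i) < 1/N := by
  set Φ : Fin (N^n + 1) → (Fin n → Fin N) :=
    fun m => fun i => ⟨(⌊Int.fract ((m:ℝ) * x i) * N⌋).toNat, bin_lt _ hN⟩ with hΦ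
  have hcard : Fintype.card (Fin n → Fin N) < Fintype.card (Fin (N^n + 1)) := by
    simp [Fintype.card_fun]
  obtain ⟨m₁, m₂, hne, heq⟩ := Fintype.exists_ne_map_eq_of_card_lt Φ hcard
  have hbin : ∀ (m₁ m₂ : Fin (N^n+1)), Φ m₁ = Φ m₂ →
      ∀ i, ⌊Int.fract ((m₁:ℝ) * x i) * N⌋ = ⌊Int.fract ((m₂:ℝ) * x i) * N⌋ := by
    intro m₁ m₂ h i
    have := congrFun h i
    rw [hΦ] at this
    simp only [Fin.mk.injEq] at this
    have h1 : (0:ℤ) ≤ ⌊Int.fract ((m₁:ℝ) * x i) * N⌋ :=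
      Int.floor_nonneg.mpr (mul_nonneg (Int.fract_nonneg _) (by positivity))
    have h2 : (0:ℤ) ≤ ⌊Int.fract ((m₂:ℝ) * x i) * N⌋ :=
      Int.floor_nonneg.mpr (mul_nonneg (Int.fract_nonneg _) (by positivity))
    omega
  rcases hne.lt_or_gt with hlt | hlt
  · refine ⟨(m₂:ℕ) - (m₁:ℕ), by omega, by omega, dirichlet_sim_step x hN hlt (hbin m₂ m₁ heq.symm)⟩
  · refine ⟨(m₁:ℕ) - (m₂:ℕ), by omega, by omega, dirichlet_sim_step x hN hlt (hbin m₁ m₂ heq)⟩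

lemma Ssim_crit_infinite : (Ssim n x (1/(n:ℝ))).Infinite := by
  have hn : 0 < n := Nat.pos_of_ne_zero (NeZero.ne n)
  have hex : ∀ N : ℕ, ∃ q : ℕ,
      q ∈ Ssim n x (1/(n:ℝ)) ∧ vnorm (fun i => (q:ℝ) * x i) < 1/((N:ℝ)+1) := by
    intro N
    obtain ⟨q, hq0, hqle, hq⟩ := dirichlet_sim x (N := N+1) (by omega)
    have hvn : vnorm (fun i => (q:ℝ) * x i) < 1/((N:ℝ)+1) := by
      refine vnorm_lt fun i => ?_
      have := hq i
      simpa using this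
    refine ⟨q, ⟨hq0, lt_of_lt_of_le hvn ?_⟩, hvn⟩
    -- 1/(N+1) ≤ q ^ (-(1/n))
    have hq1 : (1:ℝ) ≤ (q:ℝ) := by exact_mod_cast hq0
    have h1 : (q:ℝ) ^ ((1:ℝ)/n) ≤ ((N:ℝ)+1) := by
      have hle : (q:ℝ) ≤ ((N:ℝ)+1)^(n:ℕ) := by
        have : ((N+1)^n : ℕ) = ((N+1 : ℕ):ℝ)^(n:ℕ) := by push_cast; ring
        calc (q:ℝ) ≤ (((N+1)^n : ℕ) : ℝ) := by exact_mod_cast hqle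
          _ = ((N:ℝ)+1)^(n:ℕ) := by push_cast; ring
      calc (q:ℝ) ^ ((1:ℝ)/n) ≤ (((N:ℝ)+1)^(n:ℕ)) ^ ((1:ℝ)/n) :=
            Real.rpow_le_rpow (by positivity) hle (by positivity)
        _ = (((N:ℝ)+1) ^ (n:ℝ)) ^ ((1:ℝ)/n) := by rw [Real.rpow_natCast]
        _ = ((N:ℝ)+1) ^ ((n:ℝ) * ((1:ℝ)/n)) := by rw [← Real.rpow_mul (by positivity)]
        _ = ((N:ℝ)+1) ^ (1:ℝ) := by
            congr 1
            field_simp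
        _ = (N:ℝ)+1 := Real.rpow_one _
    have hpos : (0:ℝ) < (q:ℝ) ^ ((1:ℝ)/n) := Real.rpow_pos_of_pos (by positivity) _
    rw [Real.rpow_neg (by positivity)]
    rw [one_div, inv_le_inv₀ (by positivity) hpos]
    exact h1
  rcases fiber_or (fun N => (hex N).choose) _ (fun N => (hex N).choose_spec.1) with h | ⟨a, ha, hfib⟩
  · exact h
  · -- degenerate: vnorm (a x) = 0
    have hV : vnorm (fun i => (a:ℝ) * x i) = 0 := by
      refine eq_zero_of_infinite_small (vnorm_nonneg _) hfib fun N hN => ?_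
      have h2 := (hex N).choose_spec.2
      have hNa : (hex N).choose = a := hN
      rwa [hNa] at h2
    refine Ssim_infinite_of_deg ha.1 (fun i => ?_) _
    have h1 := dnint_le_vnorm (fun i => (a:ℝ) * x i) i
    have h2 := dnint_nonneg ((a:ℝ) * x i)
    rw [hV] at h1
    linarith

/- ### Dirichlet, dual -/

lemma dirichlet_dual {N : ℕ} (hN : 0 < N) :
    ∃ a : Fin n → ℤ, a ≠ 0 ∧ (∀ i, |a i| ≤ (N:ℤ)) ∧
      dnint (∑ i, (a i : ℝ) * x i) < 1/(((N+1)^n - 1 : ℕ):ℝ) := by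
  have hn : 0 < n := Nat.pos_of_ne_zero (NeZero.ne n)
  set M : ℕ := (N+1)^n - 1 with hM
  have hM1 : 0 < M := by
    have : 2 ≤ (N+1)^n := by
      calc 2 = 2^1 := rfl
        _ ≤ (N+1)^n := Nat.pow_le_pow_left (by omega) n |>.trans' (Nat.pow_le_pow_right (by omega) (by omega))
    omega
  set σ : (Fin n → Fin (N+1)) → ℝ := fun c => ∑ i, ((c i : ℕ) : ℝ) * x i with hσ
  set Φ : (Fin n → Fin (N+1)) → Fin M :=
    fun c => ⟨(⌊Int.fract (σ c) * M⌋).toNat, bin_lt _ hM1⟩ with hΦ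
  have hcard : Fintype.card (Fin M) < Fintype.card (Fin n → Fin (N+1)) := by
    simp only [Fintype.card_fin, Fintype.card_fun]
    omega
  obtain ⟨c₁, c₂, hne, heq⟩ := Fintype.exists_ne_map_eq_of_card_lt Φ hcard
  set a : Fin n → ℤ := fun i => ((c₁ i : ℕ) : ℤ) - ((c₂ i : ℕ) : ℤ) with ha
  have hane : a ≠ 0 := by
    intro h
    apply hne
    funext i
    have := congrFun h i
    simp only [ha, Pi.zero_apply, sub_eq_zero] at this
    exact Fin.ext (by exact_mod_cast this)
  have hbnd : ∀ i, |a i| ≤ (N:ℤ) := by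
    intro i
    have h1 : (c₁ i : ℕ) < N+1 := (c₁ i).2
    have h2 : (c₂ i : ℕ) < N+1 := (c₂ i).2
    rw [ha]; simp only
    rw [abs_le]; omega
  have hbin : ⌊Int.fract (σ c₁) * M⌋ = ⌊Int.fract (σ c₂) * M⌋ := by
    have := heq
    rw [hΦ] at this
    simp only [Fin.mk.injEq] at this
    have h1 : (0:ℤ) ≤ ⌊Int.fract (σ c₁) * M⌋ := Int.floor_nonneg.mpr (mul_nonneg (Int.fract_nonneg _) (by positivity))
    have h2 : (0:ℤ) ≤ ⌊Int.fract (σ c₂) * M⌋ := Int.floor_nonneg.mpr (mul_nonneg (Int.fract_nonneg _) (by positivity))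
    omega
  refine ⟨a, hane, hbnd, ?_⟩
  have hsum : ∑ i, (a i : ℝ) * x i = σ c₁ - σ c₂ := by
    rw [hσ]
    simp only
    rw [← Finset.sum_sub_distrib]
    apply Finset.sum_congr rfl
    intro i _
    rw [ha]
    push_cast
    ring
  have key : ∑ i, (a i : ℝ) * x i - ((⌊σ c₁⌋ - ⌊σ c₂⌋ : ℤ) : ℝ)
      = Int.fract (σ c₁) - Int.fract (σ c₂) := by
    rw [Int.fract, Int.fract, hsum]
    push_cast
    ring
  calc dnint (∑ i, (a i : ℝ) * x i)
      ≤ |∑ i, (a i : ℝ) * x i - ((⌊σ c₁⌋ - ⌊σ c₂⌋ : ℤ) : ℝ)| := dnint_le _ _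
    _ = |Int.fract (σ c₁) - Int.fract (σ c₂)| := by rw [key]
    _ < 1/M := dist_lt_of_bin_eq hM1 hbin

lemma Sdual_crit_infinite : (Sdual n x (n:ℝ)).Infinite := by
  have hn : 0 < n := Nat.pos_of_ne_zero (NeZero.ne n)
  have hex : ∀ N : ℕ, ∃ a : Fin n → ℤ,
      a ∈ Sdual n x (n:ℝ) ∧ dnint (∑ i, (a i : ℝ) * x i) < 1/((N:ℝ)+1) := by
    intro N
    obtain ⟨a, hane, hbnd, hsm⟩ := dirichlet_dual x (N := N+1) (by omega)
    have hMN : ((N+2)^n - 1 : ℕ) ≥ N+1 := by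
      have h1 : N+2 ≤ (N+2)^n := Nat.le_self_pow (NeZero.ne n) _
      omega
    have hMn : ((N+2)^n - 1 : ℕ) ≥ (N+1)^n := by
      have := Nat.pow_lt_pow_left (show N+1 < N+2 by omega) (NeZero.ne n)
      omega
    have hsmall : dnint (∑ i, (a i : ℝ) * x i) < 1/((N:ℝ)+1) := by
      refine lt_of_lt_of_le hsm ?_
      apply one_div_le_one_div_of_le (by positivity)
      exact_mod_cast hMN
    refine ⟨a, ⟨hane, ?_⟩, hsmall⟩
    -- dnint < isupnorm a ^ (-(n:ℝ))
    have hsup1 : (1:ℝ) ≤ isupnorm a := one_le_isupnorm hane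
    have hsupN : isupnorm a ≤ ((N:ℝ)+1) := by
      refine isupnorm_le fun i => ?_
      have := hbnd i
      calc |(a i : ℝ)| = ((|a i| : ℤ) : ℝ) := by push_cast; ring
        _ ≤ (((N+1:ℕ):ℤ):ℝ) := by exact_mod_cast this
        _ = (N:ℝ)+1 := by push_cast; ring
    refine lt_of_lt_of_le hsm ?_
    -- 1/((N+2)^n - 1) ≤ 1/(N+1)^n ≤ isupnorm a ^ (-(n:ℝ))
    have step1 : 1/(((N+2)^n - 1 : ℕ):ℝ) ≤ 1/(((N+1)^n : ℕ):ℝ) := by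
      apply one_div_le_one_div_of_le (by positivity)
      exact_mod_cast hMn
    have step2 : 1/(((N+1)^n : ℕ):ℝ) ≤ isupnorm a ^ (-(n:ℝ)) := by
      rw [Real.rpow_neg (by positivity)]
      rw [one_div]
      apply inv_anti₀ (Real.rpow_pos_of_pos (by positivity) _)
      calc isupnorm a ^ (n:ℝ) ≤ ((N:ℝ)+1) ^ (n:ℝ) :=
            Real.rpow_le_rpow (by positivity) hsupN (by positivity)
        _ = ((N:ℝ)+1) ^ (n:ℕ) := Real.rpow_natCast _ _
        _ = (((N+1)^n : ℕ):ℝ) := by push_cast; ring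
    exact le_trans step1 step2
  rcases fiber_or (fun N => (hex N).choose) _ (fun N => (hex N).choose_spec.1) with h | ⟨a, ha, hfib⟩
  · exact h
  · have hV : dnint (∑ i, (a i : ℝ) * x i) = 0 := by
      refine eq_zero_of_infinite_small (dnint_nonneg _) hfib fun N hN => ?_
      have h2 := (hex N).choose_spec.2
      have hNa : (hex N).choose = a := hN
      rwa [hNa] at h2
    exact Sdual_infinite_of_deg ha.1 hV _

end main
/- ### rpow helpers -/

lemma rpow_trick {A q e : ℝ} (hA : 0 < A) (he : 0 < e) (hq : A^((1:ℝ)/e) < q) : A < q^e := by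
  have h0 : (0:ℝ) ≤ A^((1:ℝ)/e) := (Real.rpow_pos_of_pos hA _).le
  have h1 := Real.rpow_lt_rpow h0 hq he
  rwa [← Real.rpow_mul hA.le, one_div, inv_mul_cancel₀ he.ne', Real.rpow_one] at h1

lemma rpow_neg_anti {s t w : ℝ} (h1 : 0 < s) (hst : s ≤ t) (hw : 0 ≤ w) :
    t^(-w) ≤ s^(-w) := by
  rw [Real.rpow_neg h1.le, Real.rpow_neg (h1.le.trans hst)]
  exact inv_anti₀ (Real.rpow_pos_of_pos h1 w) (Real.rpow_le_rpow h1.le hst hw)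

lemma rpow_sub_comb {q : ℝ} (hq : 0 < q) (s v : ℝ) : q^s * q^(-v) / q = q^(s - v - 1) := by
  rw [div_eq_mul_inv, ← Real.rpow_neg_one q, ← Real.rpow_add hq, ← Real.rpow_add hq]
  norm_num [sub_eq_add_neg]

lemma lt_of_exp_gap {q C D s1 s2 : ℝ} (hq0 : 0 < q) (hC : 0 < C) (hD : 0 < D)
    (hgap : C/D < q^(s2 - s1)) : C * q^s1 < D * q^s2 := by
  have h1 : C/D * q^s1 < q^(s2-s1) * q^s1 :=
    mul_lt_mul_of_pos_right hgap (Real.rpow_pos_of_pos hq0 _)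
  rw [← Real.rpow_add hq0, sub_add_cancel] at h1
  rw [div_mul_eq_mul_div, div_lt_iff₀ hD] at h1
  linarith [h1]

section main2
variable {n : ℕ} [NeZero n] (x : Fin n → ℝ)

/- ### Core construction: simultaneous → dual -/

lemma core1 {q M : ℕ} (hq : 0 < q) (hM : 0 < M) (hqM : q < M^n) :
    ∃ a : Fin n → ℤ, a ≠ 0 ∧ (∀ i, |(a i : ℝ)| ≤ (M:ℝ)) ∧
      dnint (∑ i, (a i : ℝ) * x i) ≤
        (n : ℝ) * M * vnorm (fun i => (q:ℝ) * x i) / q := by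
  haveI : NeZero q := ⟨hq.ne'⟩
  set p : Fin n → ℤ := fun i => round ((q:ℝ) * x i) with hp
  set g : (Fin n → Fin M) → ZMod q :=
    fun c => ((∑ i, ((c i : ℕ) : ℤ) * p i : ℤ) : ZMod q) with hg
  have hcard : Fintype.card (ZMod q) < Fintype.card (Fin n → Fin M) := by
    rw [ZMod.card q]
    simp only [Fintype.card_fun, Fintype.card_fin]
    exact hqM
  obtain ⟨c₁, c₂, hne, heq⟩ := Fintype.exists_ne_map_eq_of_card_lt g hcard
  set a : Fin n → ℤ := fun i => ((c₁ i : ℕ) : ℤ) - ((c₂ i : ℕ) : ℤ) with ha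
  have hane : a ≠ 0 := by
    intro h
    apply hne
    funext i
    have := congrFun h i
    simp only [ha, Pi.zero_apply, sub_eq_zero] at this
    exact Fin.ext (by exact_mod_cast this)
  have hbnd : ∀ i, |(a i : ℝ)| ≤ (M:ℝ) := by
    intro i
    have h1 : (c₁ i : ℕ) < M := (c₁ i).2
    have h2 : (c₂ i : ℕ) < M := (c₂ i).2
    have h3 : |a i| ≤ (M:ℤ) := by rw [ha]; simp only; rw [abs_le]; omega
    calc |(a i : ℝ)| = ((|a i| : ℤ) : ℝ) := by push_cast; ring
      _ ≤ ((M:ℤ):ℝ) := by exact_mod_cast h3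
      _ = (M:ℝ) := by push_cast; ring
  have hdvd : (q:ℤ) ∣ ∑ i, a i * p i := by
    have h1 : ((∑ i, ((c₁ i : ℕ) : ℤ) * p i : ℤ) : ZMod q)
        = ((∑ i, ((c₂ i : ℕ) : ℤ) * p i : ℤ) : ZMod q) := heq
    have h2 := ((ZMod.intCast_eq_intCast_iff _ _ _).mp h1).dvd
    have h3 : ∑ i, ((c₂ i : ℕ) : ℤ) * p i - ∑ i, ((c₁ i : ℕ) : ℤ) * p i
        = -(∑ i, a i * p i) := by
      rw [← Finset.sum_sub_distrib]
      rw [← Finset.sum_neg_distrib]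
      apply Finset.sum_congr rfl
      intro i _
      rw [ha]; ring
    rw [h3] at h2
    exact dvd_neg.mp h2
  obtain ⟨b, hb⟩ := hdvd
  refine ⟨a, hane, hbnd, ?_⟩
  set E := vnorm (fun i => (q:ℝ) * x i) with hE
  have hE0 : 0 ≤ E := vnorm_nonneg _
  have key : (q:ℝ) * (∑ i, (a i : ℝ) * x i - (b:ℝ))
      = ∑ i, (a i : ℝ) * ((q:ℝ) * x i - (p i : ℝ)) := by
    have h4 : ∑ i, (a i : ℝ) * ((q:ℝ) * x i - (p i : ℝ))
        = (q:ℝ) * ∑ i, (a i : ℝ) * x i - ((∑ i, a i * p i : ℤ) : ℝ) := by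
      push_cast
      rw [Finset.mul_sum, ← Finset.sum_sub_distrib]
      apply Finset.sum_congr rfl
      intro i _
      ring
    rw [h4, hb]
    push_cast
    ring
  have hbound : |∑ i, (a i : ℝ) * ((q:ℝ) * x i - (p i : ℝ))| ≤ (n:ℝ) * M * E := by
    calc |∑ i, (a i : ℝ) * ((q:ℝ) * x i - (p i : ℝ))|
        ≤ ∑ i, |(a i : ℝ) * ((q:ℝ) * x i - (p i : ℝ))| := Finset.abs_sum_le_sum_abs _ _
      _ ≤ ∑ _i : Fin n, (M:ℝ) * E := by
          apply Finset.sum_le_sum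
          intro i _
          rw [abs_mul]
          have hd : |(q:ℝ) * x i - (p i : ℝ)| = dnint ((q:ℝ) * x i) := rfl
          rw [hd]
          have h5 : dnint ((q:ℝ) * x i) ≤ E := dnint_le_vnorm (fun i => (q:ℝ) * x i) i
          exact mul_le_mul (hbnd i) h5 (dnint_nonneg _) (by positivity)
      _ = (n:ℝ) * M * E := by
          rw [Finset.sum_const, Finset.card_univ, Fintype.card_fin, nsmul_eq_mul]
          ring
  have hq0 : (0:ℝ) < q := by exact_mod_cast hq
  calc dnint (∑ i, (a i : ℝ) * x i) ≤ |∑ i, (a i : ℝ) * x i - (b:ℝ)| := dnint_le _ _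
    _ = |(q:ℝ) * (∑ i, (a i : ℝ) * x i - (b:ℝ))| / q := by
        rw [abs_mul, abs_of_pos hq0]
        field_simp
    _ = |∑ i, (a i : ℝ) * ((q:ℝ) * x i - (p i : ℝ))| / q := by rw [key]
    _ ≤ (n:ℝ) * M * E / q := by
        rw [div_le_div_iff_of_pos_right hq0]
        exact hbound

/- ### Transference: simultaneous → dual -/

lemma transfer1 {v : ℝ} (hv : 1/(n:ℝ) < v) (hinf : (Ssim n x v).Infinite) :
    ∃ w : ℝ, (n:ℝ) < w ∧ (Sdual n x w).Infinite := by
  have hn : 0 < n := Nat.pos_of_ne_zero (NeZero.ne n)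
  have hn1 : (1:ℝ) ≤ (n:ℝ) := by exact_mod_cast hn
  have hnR : (0:ℝ) < (n:ℝ) := by linarith
  have hnv : 1 < (n:ℝ) * v := by
    have h := (div_lt_iff₀ hnR).mp hv
    linarith
  set w : ℝ := ((n:ℝ) + ((n:ℝ)*v + n - 1))/2 with hwdef
  have hwn : (n:ℝ) < w := by rw [hwdef]; linarith
  have hw0 : (0:ℝ) ≤ w := by linarith
  set γ : ℝ := (n:ℝ)*v + n - 1 - w with hγdef
  have hγ : 0 < γ := by rw [hγdef, hwdef]; linarith
  set e₂ : ℝ := v + 1 - 1/(n:ℝ) with he₂def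
  have he₂ : 0 < e₂ := by
    have h1 : 1/(n:ℝ) ≤ 1 := by rw [div_le_one hnR]; exact hn1
    have h2 : 0 < v := lt_trans (by positivity) hv
    rw [he₂def]; linarith
  refine ⟨w, hwn, ?_⟩
  have hex : ∀ N : ℕ, ∃ a : Fin n → ℤ,
      a ∈ Sdual n x w ∧ dnint (∑ i, (a i : ℝ) * x i) < 1/((N:ℝ)+1) := by
    intro N
    set A₁ : ℝ := 2^(w+1)*(n:ℝ) with hA₁
    set A₂ : ℝ := 2*(n:ℝ)*((N:ℝ)+1) with hA₂
    have hA₁0 : 0 < A₁ := by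
      rw [hA₁]; positivity
    have hA₂0 : 0 < A₂ := by rw [hA₂]; positivity
    set B : ℝ := max (A₁^((1:ℝ)/(γ/(n:ℝ)))) (A₂^((1:ℝ)/e₂)) with hB
    obtain ⟨q, hqS, hqB⟩ := hinf.exists_gt ⌈B⌉₊
    have hq0 : 0 < q := hqS.1
    have hq1 : (1:ℝ) ≤ (q:ℝ) := by exact_mod_cast hq0
    have hqR0 : (0:ℝ) < q := by linarith
    have hqBR : B < (q:ℝ) := by
      calc B ≤ (⌈B⌉₊ : ℝ) := Nat.le_ceil _
        _ < (q:ℝ) := by exact_mod_cast hqB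
    have hkey₁ : A₁ < (q:ℝ)^(γ/(n:ℝ)) :=
      rpow_trick hA₁0 (by positivity) (lt_of_le_of_lt (le_max_left _ _) hqBR)
    have hkey₂ : A₂ < (q:ℝ)^e₂ :=
      rpow_trick hA₂0 he₂ (lt_of_le_of_lt (le_max_right _ _) hqBR)
    -- set up M
    set r : ℝ := (q:ℝ)^((1:ℝ)/n) with hr
    have hrpos : 0 < r := Real.rpow_pos_of_pos hqR0 _
    have hr1 : (1:ℝ) ≤ r := by
      rw [hr]
      calc (1:ℝ) = (1:ℝ)^((1:ℝ)/n) := (Real.one_rpow _).symm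
        _ ≤ (q:ℝ)^((1:ℝ)/n) := Real.rpow_le_rpow (by norm_num) hq1 (by positivity)
    set M : ℕ := ⌊r⌋₊ + 1 with hM
    have hM0 : 0 < M := by omega
    have hMgt : r < (M:ℝ) := by
      rw [hM]; push_cast; exact Nat.lt_floor_add_one r
    have hMle : (M:ℝ) ≤ 2*r := by
      rw [hM]; push_cast
      have := Nat.floor_le hrpos.le
      linarith
    have hM1 : (1:ℝ) ≤ (M:ℝ) := by exact_mod_cast hM0
    have hqM : q < M^n := by
      have h2 : r^(n:ℕ) < (M:ℝ)^(n:ℕ) := pow_lt_pow_left₀ hMgt hrpos.le (NeZero.ne n)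
      have h3 : r^(n:ℕ) = (q:ℝ) := by
        rw [hr, ← Real.rpow_natCast ((q:ℝ)^((1:ℝ)/n)) n, ← Real.rpow_mul hqR0.le]
        rw [one_div, inv_mul_cancel₀ hnR.ne', Real.rpow_one]
      have h1 : (q:ℝ) < (M:ℝ)^(n:ℕ) := by rw [← h3]; exact h2
      exact_mod_cast h1
    obtain ⟨a, hane, habnd, hadnint⟩ := core1 x hq0 hM0 hqM
    set E := vnorm (fun i => (q:ℝ) * x i) with hE
    have hE0 : 0 ≤ E := vnorm_nonneg _
    have hElt : E < (q:ℝ)^(-v) := hqS.2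
    set s₁ : ℝ := (1:ℝ)/n - v - 1 with hs₁
    set R : ℝ := 2*(n:ℝ)*(q:ℝ)^s₁ with hR
    have hDR : dnint (∑ i, (a i : ℝ) * x i) ≤ R := by
      refine le_trans hadnint ?_
      have h1 : (n:ℝ) * M * E / q ≤ (n:ℝ) * (2*r) * (q:ℝ)^(-v) / q := by
        rw [div_le_div_iff_of_pos_right hqR0]
        apply mul_le_mul
        · exact mul_le_mul_of_nonneg_left hMle (by positivity)
        · exact hElt.le
        · exact hE0
        · positivity
      refine h1.trans (le_of_eq ?_)
      have h2 : (n:ℝ) * (2*r) * (q:ℝ)^(-v) / q = 2*(n:ℝ)*(r * (q:ℝ)^(-v) / q) := by ring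
      rw [h2, hr, rpow_sub_comb hqR0, hR, hs₁]
    -- the two target inequalities
    have hsup1 : (1:ℝ) ≤ isupnorm a := one_le_isupnorm hane
    have hsupM : isupnorm a ≤ 2*r := le_trans (isupnorm_le habnd) hMle
    have htarget1 : R < isupnorm a ^ (-w) := by
      have hstep : R < (2*r)^(-w) := by
        have h4 : (2*r)^(-w) = 2^(-w) * (q:ℝ)^(((1:ℝ)/n)*(-w)) := by
          rw [Real.mul_rpow (by norm_num) hrpos.le, hr, ← Real.rpow_mul hqR0.le]
        rw [h4, hR]
        apply lt_of_exp_gap hqR0 (by positivity) (Real.rpow_pos_of_pos (by norm_num) _)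
        have hCD : 2*(n:ℝ) / 2^(-w) = A₁ := by
          rw [Real.rpow_neg (by norm_num : (0:ℝ) ≤ 2), hA₁,
            Real.rpow_add (by norm_num : (0:ℝ) < 2), Real.rpow_one,
            div_eq_mul_inv, inv_inv]
          ring
        have hexp : ((1:ℝ)/n)*(-w) - s₁ = γ/(n:ℝ) := by
          rw [hs₁, hγdef]
          field_simp
          ring
        rw [hCD, hexp]
        exact hkey₁
      exact lt_of_lt_of_le hstep (rpow_neg_anti (by linarith) hsupM hw0)
    have htarget2 : R < 1/((N:ℝ)+1) := by
      have h5 : (q:ℝ)^s₁ = ((q:ℝ)^e₂)⁻¹ := by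
        rw [show s₁ = -e₂ by rw [hs₁, he₂def]; ring, Real.rpow_neg hqR0.le]
      rw [hR, h5]
      rw [div_eq_mul_inv 1, one_mul] at *
      rw [mul_inv_lt_iff₀' (Real.rpow_pos_of_pos hqR0 _)]
      rw [show (q:ℝ)^e₂ * ((N:ℝ)+1)⁻¹ = (q:ℝ)^e₂ / ((N:ℝ)+1) by ring]
      rw [lt_div_iff₀ (by positivity)]
      calc 2*(n:ℝ)*((N:ℝ)+1) = A₂ := by rw [hA₂]
        _ < (q:ℝ)^e₂ := hkey₂
    exact ⟨a, ⟨hane, lt_of_le_of_lt hDR htarget1⟩, lt_of_le_of_lt hDR htarget2⟩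
  rcases fiber_or (fun N => (hex N).choose) _ (fun N => (hex N).choose_spec.1) with h | ⟨a, ha, hfib⟩
  · exact h
  · have hV : dnint (∑ i, (a i : ℝ) * x i) = 0 := by
      refine eq_zero_of_infinite_small (dnint_nonneg _) hfib fun N hN => ?_
      have h2 := (hex N).choose_spec.2
      have hNa : (hex N).choose = a := hN
      rwa [hNa] at h2
    exact Sdual_infinite_of_deg ha.1 hV _

end main2
section main3
variable {n : ℕ} [NeZero n] (x : Fin n → ℝ)

/- ### Core construction: dual → simultaneous -/

lemma core2_pair {a : Fin n → ℤ} {j : Fin n} (hmax : ∀ i, |a i| ≤ |a j|)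
    (haj : a j ≠ 0) {K : ℕ} (hK : 0 < K) {T u v : ℕ} (huv : v < u) (huT : u ≤ T)
    (hbins : ∀ i : Fin n, i ≠ j →
      ⌊Int.fract ((u:ℝ) * x i) * K⌋ = ⌊Int.fract ((v:ℝ) * x i) * K⌋)
    (hdvd : (a j) ∣ ((∑ i, a i * ⌊(u:ℝ) * x i⌋ - round (∑ i, (a i:ℝ) * x i) * u)
      - (∑ i, a i * ⌊(v:ℝ) * x i⌋ - round (∑ i, (a i:ℝ) * x i) * v))) :
    ∀ i, dnint (((u - v : ℕ):ℝ) * x i) ≤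
      (T:ℝ) * dnint (∑ i, (a i:ℝ) * x i) / |(a j : ℝ)| + (n:ℝ)/K := by
  have hn : 0 < n := Nat.pos_of_ne_zero (NeZero.ne n)
  set σ : ℝ := ∑ i, (a i:ℝ) * x i with hσ
  set b : ℤ := round σ with hb
  set δ : ℝ := dnint σ with hδ
  have hδ0 : 0 ≤ δ := dnint_nonneg _
  set t : ℕ := u - v with ht
  have htpos : 0 < t := by omega
  have htT : t ≤ T := by omega
  have htR : (t:ℝ) = (u:ℝ) - (v:ℝ) := by rw [ht]; push_cast [Nat.cast_sub huv.le]; ring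
  set pt : Fin n → ℤ := fun i => ⌊(u:ℝ) * x i⌋ - ⌊(v:ℝ) * x i⌋ with hpt
  have hfr : ∀ i, (t:ℝ) * x i - (pt i : ℝ)
      = Int.fract ((u:ℝ) * x i) - Int.fract ((v:ℝ) * x i) := by
    intro i
    rw [Int.fract, Int.fract, hpt]
    simp only
    rw [htR]
    push_cast
    ring
  have hsmall : ∀ i, i ≠ j → |(t:ℝ) * x i - (pt i : ℝ)| < 1/K := by
    intro i hi
    rw [hfr i]
    exact dist_lt_of_bin_eq hK (hbins i hi)
  -- divisibility gives m
  have hdvd' : (a j) ∣ (∑ i, a i * pt i - b * t) := by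
    have h1 : ∑ i, a i * pt i = ∑ i, a i * ⌊(u:ℝ)*x i⌋ - ∑ i, a i * ⌊(v:ℝ)*x i⌋ := by
      rw [← Finset.sum_sub_distrib]
      apply Finset.sum_congr rfl
      intro i _
      simp only [hpt]
      ring
    have htz : (t:ℤ) = (u:ℤ) - (v:ℤ) := by omega
    have heq2 : ∑ i, a i * pt i - b * (t:ℤ)
        = (∑ i, a i * ⌊(u:ℝ) * x i⌋ - b * u) - (∑ i, a i * ⌊(v:ℝ) * x i⌋ - b * v) := by
      rw [h1, htz]
      ring
    rw [heq2]
    exact hdvd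
  obtain ⟨m, hm⟩ := hdvd'
  set p : Fin n → ℤ := Function.update pt j (pt j - m) with hp
  have hpne : ∀ i, i ≠ j → p i = pt i := by
    intro i hi
    rw [hp, Function.update_of_ne hi]
  have hpj : p j = pt j - m := by rw [hp, Function.update_self]
  have hsplitZ : ∀ (g : Fin n → ℤ), ∑ i, g i = g j + ∑ i ∈ Finset.univ.erase j, g i :=
    fun g => (Finset.add_sum_erase _ g (Finset.mem_univ j)).symm
  have hsplitR : ∀ (g : Fin n → ℝ), ∑ i, g i = g j + ∑ i ∈ Finset.univ.erase j, g i :=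
    fun g => (Finset.add_sum_erase _ g (Finset.mem_univ j)).symm
  have hap : ∑ i, a i * p i = b * t := by
    have h1 : ∑ i, a i * p i = a j * (pt j - m) + ∑ i ∈ Finset.univ.erase j, a i * pt i := by
      rw [hsplitZ (fun i => a i * p i), hpj]
      congr 1
      apply Finset.sum_congr rfl
      intro i hi
      rw [hpne i (Finset.ne_of_mem_erase hi)]
    have h2 : ∑ i, a i * pt i = a j * pt j + ∑ i ∈ Finset.univ.erase j, a i * pt i :=
      hsplitZ (fun i => a i * pt i)
    have h3 : ∑ i, a i * p i = ∑ i, a i * pt i - a j * m := by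
      rw [h1, h2]; ring
    rw [h3]
    omega
  -- real identity
  have hsum : ∑ i, (a i:ℝ) * ((t:ℝ) * x i - (p i : ℝ)) = (t:ℝ) * (σ - b) := by
    have h4 : ∑ i, (a i:ℝ) * ((t:ℝ) * x i - (p i : ℝ))
        = (t:ℝ) * σ - ((∑ i, a i * p i : ℤ) : ℝ) := by
      rw [hσ, Finset.mul_sum]
      push_cast
      rw [← Finset.sum_sub_distrib]
      apply Finset.sum_congr rfl
      intro i _
      ring
    rw [h4, hap]
    push_cast
    ring
  set Xr : ℝ := |(a j : ℝ)| with hXr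
  have hXr1 : (1:ℝ) ≤ Xr := by
    rw [hXr]
    have h5 : (1:ℤ) ≤ |a j| := Int.one_le_abs haj
    calc (1:ℝ) = ((1:ℤ):ℝ) := by norm_num
      _ ≤ ((|a j| : ℤ) : ℝ) := by exact_mod_cast h5
      _ = |(a j:ℝ)| := by push_cast; ring
  have hXr0 : (0:ℝ) < Xr := by linarith
  -- bound at j
  have hjbound : Xr * |(t:ℝ) * x j - (p j : ℝ)| ≤ (T:ℝ)*δ + ((n:ℝ)-1) * (Xr/K) := by
    have h6 : (a j : ℝ) * ((t:ℝ) * x j - (p j : ℝ))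
        = (t:ℝ) * (σ - b) - ∑ i ∈ Finset.univ.erase j, (a i:ℝ) * ((t:ℝ) * x i - (pt i : ℝ)) := by
      have h7 := hsplitR (fun i => (a i:ℝ) * ((t:ℝ) * x i - (p i : ℝ)))
      rw [hsum] at h7
      have h8 : ∑ i ∈ Finset.univ.erase j, (a i:ℝ) * ((t:ℝ) * x i - (p i : ℝ))
          = ∑ i ∈ Finset.univ.erase j, (a i:ℝ) * ((t:ℝ) * x i - (pt i : ℝ)) := by
        apply Finset.sum_congr rfl
        intro i hi
        rw [hpne i (Finset.ne_of_mem_erase hi)]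
      rw [h8] at h7
      linarith [h7]
    calc Xr * |(t:ℝ) * x j - (p j : ℝ)| = |(a j : ℝ) * ((t:ℝ) * x j - (p j : ℝ))| := by
          rw [abs_mul, hXr]
      _ = |(t:ℝ) * (σ - b) - ∑ i ∈ Finset.univ.erase j, (a i:ℝ) * ((t:ℝ) * x i - (pt i : ℝ))| := by
          rw [h6]
      _ ≤ |(t:ℝ) * (σ - b)| + |∑ i ∈ Finset.univ.erase j, (a i:ℝ) * ((t:ℝ) * x i - (pt i : ℝ))| :=
          abs_sub _ _
      _ ≤ (T:ℝ)*δ + ((n:ℝ)-1) * (Xr/K) := by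
          gcongr ?_ + ?_
          · rw [abs_mul]
            have ht0 : |(t:ℝ)| = (t:ℝ) := abs_of_nonneg (by positivity)
            have hδeq : |σ - (b:ℝ)| = δ := rfl
            rw [ht0, hδeq]
            have : (t:ℝ) ≤ (T:ℝ) := by exact_mod_cast htT
            exact mul_le_mul_of_nonneg_right this hδ0
          · calc |∑ i ∈ Finset.univ.erase j, (a i:ℝ) * ((t:ℝ) * x i - (pt i : ℝ))|
                ≤ ∑ i ∈ Finset.univ.erase j, |(a i:ℝ) * ((t:ℝ) * x i - (pt i : ℝ))| :=
                  Finset.abs_sum_le_sum_abs _ _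
              _ ≤ ∑ _i ∈ Finset.univ.erase j, Xr * (1/K) := by
                  apply Finset.sum_le_sum
                  intro i hi
                  rw [abs_mul]
                  have hai : |(a i:ℝ)| ≤ Xr := by
                    rw [hXr]
                    have := hmax i
                    calc |(a i:ℝ)| = ((|a i| : ℤ):ℝ) := by push_cast; ring
                      _ ≤ ((|a j| : ℤ):ℝ) := by exact_mod_cast this
                      _ = |(a j:ℝ)| := by push_cast; ring
                  exact mul_le_mul hai (hsmall i (Finset.ne_of_mem_erase hi)).le
                    (abs_nonneg _) (le_trans (abs_nonneg _) hai)
              _ = ((n:ℝ)-1) * (Xr/K) := by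
                  rw [Finset.sum_const, Finset.card_erase_of_mem (Finset.mem_univ j),
                    Finset.card_univ, Fintype.card_fin, nsmul_eq_mul]
                  have : ((n-1 : ℕ):ℝ) = (n:ℝ) - 1 := by
                    push_cast [Nat.cast_sub hn]
                    ring
                  rw [this]
                  ring
  intro i
  rcases eq_or_ne i j with rfl | hij
  · -- i = j
    have h9 : dnint ((t:ℝ) * x i) ≤ |(t:ℝ) * x i - (p i : ℝ)| := dnint_le _ _
    have h10 : |(t:ℝ) * x i - (p i : ℝ)| ≤ (T:ℝ)*δ/Xr + ((n:ℝ)-1)/K := by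
      rw [← mul_le_mul_iff_right₀ hXr0]
      calc Xr * |(t:ℝ) * x i - (p i : ℝ)| ≤ (T:ℝ)*δ + ((n:ℝ)-1) * (Xr/K) := hjbound
        _ = Xr * ((T:ℝ)*δ/Xr + ((n:ℝ)-1)/K) := by
            field_simp
    have hK0 : (0:ℝ) < K := by exact_mod_cast hK
    have h13 : ((n:ℝ)-1)/K ≤ (n:ℝ)/K := by
      gcongr
      linarith
    linarith
  · -- i ≠ j
    have h9 : dnint ((t:ℝ) * x i) ≤ |(t:ℝ) * x i - (pt i : ℝ)| := dnint_le _ _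
    have h10 := (hsmall i hij).le
    have hK0 : (0:ℝ) < K := by exact_mod_cast hK
    have h11 : (1:ℝ)/K ≤ (n:ℝ)/K := by
      gcongr
      exact_mod_cast hn
    have h12 : (0:ℝ) ≤ (T:ℝ)*δ/Xr := by positivity
    linarith

lemma core2 {a : Fin n → ℤ} {j : Fin n} (hmax : ∀ i, |a i| ≤ |a j|)
    (haj : a j ≠ 0) {K : ℕ} (hK : 0 < K) :
    ∃ t : ℕ, 0 < t ∧ t ≤ K^(n-1) * (a j).natAbs ∧
      ∀ i, dnint ((t:ℝ) * x i) ≤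
        ((K^(n-1) * (a j).natAbs : ℕ):ℝ) * dnint (∑ i, (a i:ℝ) * x i) / |(a j : ℝ)|
          + (n:ℝ)/K := by
  set Am : ℕ := (a j).natAbs with hAm
  have hAm0 : 0 < Am := Int.natAbs_pos.mpr haj
  haveI : NeZero Am := ⟨hAm0.ne'⟩
  set T : ℕ := K^(n-1) * Am with hT
  set b : ℤ := round (∑ i, (a i:ℝ) * x i) with hb
  set c : ℕ → ℤ := fun s => ∑ i, a i * ⌊(s:ℝ) * x i⌋ - b * s with hc
  set Φ : Fin (T+1) → (({i : Fin n // i ≠ j} → Fin K) × ZMod Am) :=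
    fun s => (fun i => ⟨(⌊Int.fract (((s:ℕ):ℝ) * x i.1) * K⌋).toNat, bin_lt _ hK⟩,
      ((c s : ℤ) : ZMod Am)) with hΦ
  have hcards : Fintype.card ({i : Fin n // i ≠ j} → Fin K) = K^(n-1) := by
    rw [Fintype.card_fun, Fintype.card_fin]
    congr 1
    rw [Fintype.card_subtype_compl, Fintype.card_subtype_eq, Fintype.card_fin]
  have hcard : Fintype.card (({i : Fin n // i ≠ j} → Fin K) × ZMod Am)
      < Fintype.card (Fin (T+1)) := by
    rw [Fintype.card_prod, hcards, ZMod.card, Fintype.card_fin, ← hT]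
    omega
  obtain ⟨s₁, s₂, hne, heq⟩ := Fintype.exists_ne_map_eq_of_card_lt Φ hcard
  have hbins : ∀ (s₁ s₂ : Fin (T+1)), Φ s₁ = Φ s₂ → ∀ i : Fin n, i ≠ j →
      ⌊Int.fract (((s₁:ℕ):ℝ) * x i) * K⌋ = ⌊Int.fract (((s₂:ℕ):ℝ) * x i) * K⌋ := by
    intro s₁ s₂ h i hi
    have h1 := congrFun (congrArg Prod.fst h) ⟨i, hi⟩
    rw [hΦ] at h1
    simp only [Fin.mk.injEq] at h1
    have h2 : (0:ℤ) ≤ ⌊Int.fract (((s₁:ℕ):ℝ) * x i) * K⌋ :=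
      Int.floor_nonneg.mpr (mul_nonneg (Int.fract_nonneg _) (by positivity))
    have h3 : (0:ℤ) ≤ ⌊Int.fract (((s₂:ℕ):ℝ) * x i) * K⌋ :=
      Int.floor_nonneg.mpr (mul_nonneg (Int.fract_nonneg _) (by positivity))
    omega
  have hcong : ∀ (s₁ s₂ : Fin (T+1)), Φ s₁ = Φ s₂ →
      (a j) ∣ (c (s₁:ℕ) - c (s₂:ℕ)) := by
    intro s₁ s₂ h
    have h1 : ((c (s₁:ℕ) : ℤ) : ZMod Am) = ((c (s₂:ℕ) : ℤ) : ZMod Am) :=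
      congrArg Prod.snd h
    have h2 := ((ZMod.intCast_eq_intCast_iff _ _ _).mp h1).dvd
    have h3 : ((Am:ℕ):ℤ) ∣ (c (s₁:ℕ) - c (s₂:ℕ)) := by
      have := (dvd_neg.mpr h2)
      simpa using this
    rw [hAm] at h3
    exact Int.natAbs_dvd.mp h3
  rcases hne.lt_or_gt with hlt | hlt
  · -- s₁ < s₂ : use u = s₂, v = s₁
    refine ⟨(s₂:ℕ) - (s₁:ℕ), by omega, by have := s₂.isLt; omega, ?_⟩
    exact core2_pair x hmax haj hK hlt (Fin.is_le s₂)
      (hbins s₂ s₁ heq.symm) (hcong s₂ s₁ heq.symm)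
  · refine ⟨(s₁:ℕ) - (s₂:ℕ), by omega, by have := s₁.isLt; omega, ?_⟩
    exact core2_pair x hmax haj hK hlt (Fin.is_le s₁)
      (hbins s₁ s₂ heq) (hcong s₁ s₂ heq)

/- ### Transference: dual → simultaneous -/

lemma transfer2 {u : ℝ} (hu : (n:ℝ) < u) (hinf : (Sdual n x u).Infinite) :
    ∃ v : ℝ, 1/(n:ℝ) < v ∧ (Ssim n x v).Infinite := by
  have hn : 0 < n := Nat.pos_of_ne_zero (NeZero.ne n)
  have hn1 : (1:ℝ) ≤ (n:ℝ) := by exact_mod_cast hn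
  have hnR : (0:ℝ) < (n:ℝ) := by linarith
  have hu0 : (0:ℝ) < u := lt_of_le_of_lt hnR.le hu
  set D : ℝ := ((n:ℝ)-1)*u + n with hD
  have hD0 : (0:ℝ) < D := by
    rw [hD]
    have : (0:ℝ) ≤ ((n:ℝ)-1)*u := mul_nonneg (by linarith) hu0.le
    linarith
  have hv₀ : 1/(n:ℝ) < u/D := by
    rw [div_lt_div_iff₀ hnR hD0, hD]
    nlinarith
  set v : ℝ := (1/(n:ℝ) + u/D)/2 with hv
  have hv1 : 1/(n:ℝ) < v := by rw [hv]; linarith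
  have hv2 : v < u/D := by rw [hv]; linarith
  have hv0 : 0 < v := lt_trans (by positivity) hv1
  set γ : ℝ := u - v*D with hγdef
  have hγ : 0 < γ := by
    rw [hγdef]
    have := (lt_div_iff₀ hD0).mp hv2
    linarith
  refine ⟨v, hv1, ?_⟩
  set C₀ : ℝ := (2:ℝ)^((n:ℕ)-1) + n with hC₀
  have hC₀0 : 0 < C₀ := by rw [hC₀]; positivity
  have hex : ∀ N : ℕ, ∃ t : ℕ,
      t ∈ Ssim n x v ∧ vnorm (fun i => (t:ℝ) * x i) < 1/((N:ℝ)+1) := by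
    intro N
    set A₁ : ℝ := C₀ * ((2:ℝ)^((n:ℕ)-1))^v with hA₁
    have hA₁0 : 0 < A₁ := by rw [hA₁]; positivity
    set A₂ : ℝ := C₀ * ((N:ℝ)+1) with hA₂
    have hA₂0 : 0 < A₂ := by rw [hA₂]; positivity
    set B : ℝ := max (max (A₁^((1:ℝ)/(γ/(n:ℝ)))) (A₂^((1:ℝ)/(u/(n:ℝ))))) 1 with hB
    obtain ⟨a, haS, haB⟩ := exists_isupnorm_gt hinf B
    have hane : a ≠ 0 := haS.1
    have hX1 : (1:ℝ) ≤ isupnorm a := one_le_isupnorm hane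
    obtain ⟨j, hjX, hjmax⟩ := exists_isupnorm_max a
    set X : ℝ := isupnorm a with hXdef
    have hX0 : (0:ℝ) < X := by linarith
    have hXB : B < X := haB
    have hXgt1 : (1:ℝ) ≤ X := hX1
    have haj : a j ≠ 0 := by
      intro h
      rw [hjX, h] at hX1
      norm_num at hX1
    have hkey₁ : A₁ < X^(γ/(n:ℝ)) :=
      rpow_trick hA₁0 (by positivity) (lt_of_le_of_lt (le_trans (le_max_left _ _) (le_max_left _ _)) hXB)
    have hkey₂ : A₂ < X^(u/(n:ℝ)) :=
      rpow_trick hA₂0 (by positivity) (lt_of_le_of_lt (le_trans (le_max_right _ _) (le_max_left _ _)) hXB)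
    -- K
    set K : ℕ := ⌈X^(u/(n:ℝ))⌉₊ with hKdef
    have hXun1 : (1:ℝ) ≤ X^(u/(n:ℝ)) := by
      calc (1:ℝ) = (1:ℝ)^(u/(n:ℝ)) := (Real.one_rpow _).symm
        _ ≤ X^(u/(n:ℝ)) := Real.rpow_le_rpow (by norm_num) hXgt1 (by positivity)
    have hK0 : 0 < K := by
      rw [hKdef]
      exact Nat.ceil_pos.mpr (by linarith)
    have hKge : X^(u/(n:ℝ)) ≤ (K:ℝ) := by rw [hKdef]; exact Nat.le_ceil _
    have hKle : (K:ℝ) ≤ 2 * X^(u/(n:ℝ)) := by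
      rw [hKdef]
      have h1 : (⌈X^(u/(n:ℝ))⌉₊ : ℝ) < X^(u/(n:ℝ)) + 1 :=
        Nat.ceil_lt_add_one (by positivity)
      linarith
    -- apply core2
    obtain ⟨t, ht0, htT, htb⟩ := core2 x hjmax haj hK0
    set Am : ℕ := (a j).natAbs with hAm
    have hAmX : ((Am:ℕ):ℝ) = X := by
      rw [hAm, hjX]
      push_cast [Nat.cast_natAbs]
      ring
    set T : ℕ := K^(n-1) * Am with hT
    set δ : ℝ := dnint (∑ i, (a i:ℝ) * x i) with hδ
    have hδ0 : 0 ≤ δ := dnint_nonneg _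
    have hδX : δ < X^(-u) := haS.2
    have hXj : |(a j : ℝ)| = X := by
      rw [hjX]
    -- T ≤ T'
    set E' : ℝ := (u/(n:ℝ))*((n:ℝ)-1) + 1 with hE'
    set T' : ℝ := (2:ℝ)^((n:ℕ)-1) * X^E' with hT'
    have hTT' : (T:ℝ) ≤ T' := by
      have h1 : ((K^(n-1) : ℕ):ℝ) ≤ (2 * X^(u/(n:ℝ)))^((n:ℕ)-1) := by
        push_cast
        exact pow_le_pow_left₀ (by positivity) hKle _
      have h2 : (2 * X^(u/(n:ℝ)))^((n:ℕ)-1)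
          = (2:ℝ)^((n:ℕ)-1) * X^((u/(n:ℝ))*(((n:ℕ)-1 : ℕ):ℝ)) := by
        rw [mul_pow]
        congr 1
        rw [← Real.rpow_natCast (X^(u/(n:ℝ))) (n-1), ← Real.rpow_mul hX0.le]
      have h3 : ((u/(n:ℝ))*(((n:ℕ)-1 : ℕ):ℝ)) = (u/(n:ℝ))*((n:ℝ)-1) := by
        congr 1
        push_cast [Nat.cast_sub hn]
        ring
      have h4 : (T:ℝ) = ((K^(n-1):ℕ):ℝ) * ((Am:ℕ):ℝ) := by
        rw [hT]; push_cast; ring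
      rw [h4, hAmX]
      calc ((K^(n-1):ℕ):ℝ) * X ≤ (2:ℝ)^((n:ℕ)-1) * X^((u/(n:ℝ))*((n:ℝ)-1)) * X := by
            apply mul_le_mul_of_nonneg_right ?_ hX0.le
            rw [← h3, ← h2]
            exact h1
        _ = T' := by
            rw [hT', hE', Real.rpow_add hX0, Real.rpow_one]
            ring
    -- main bound
    have hbound : ∀ i, dnint ((t:ℝ) * x i) ≤ C₀ * X^(-(u/(n:ℝ))) := by
      intro i
      refine le_trans (htb i) ?_
      have hb1 : (T:ℝ) * δ / |(a j : ℝ)| ≤ (2:ℝ)^((n:ℕ)-1) * X^(-(u/(n:ℝ))) := by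
        rw [hXj]
        have h5 : (T:ℝ) * δ ≤ T' * X^(-u) :=
          mul_le_mul hTT' hδX.le hδ0 (by rw [hT']; positivity)
        have h6 : (T:ℝ) * δ / X ≤ T' * X^(-u) / X := by
          rw [div_le_div_iff_of_pos_right hX0]
          exact h5
        refine h6.trans (le_of_eq ?_)
        rw [hT', hE']
        have h7 : (2:ℝ)^((n:ℕ)-1) * X^((u/(n:ℝ))*((n:ℝ)-1) + 1) * X^(-u) / X
            = (2:ℝ)^((n:ℕ)-1) * (X^((u/(n:ℝ))*((n:ℝ)-1) + 1) * X^(-u) / X) := by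
          ring
        rw [h7, rpow_sub_comb hX0]
        congr 1
        congr 1
        field_simp
        ring
      have hb2 : (n:ℝ)/K ≤ (n:ℝ) * X^(-(u/(n:ℝ))) := by
        rw [div_eq_mul_inv]
        apply mul_le_mul_of_nonneg_left ?_ hnR.le
        rw [Real.rpow_neg hX0.le]
        exact inv_anti₀ (by positivity) hKge
      calc (T:ℝ) * δ / |(a j : ℝ)| + (n:ℝ)/K
          ≤ (2:ℝ)^((n:ℕ)-1) * X^(-(u/(n:ℝ))) + (n:ℝ) * X^(-(u/(n:ℝ))) := add_le_add hb1 hb2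
        _ = C₀ * X^(-(u/(n:ℝ))) := by rw [hC₀]; ring
    -- target (i)
    have htarget1 : C₀ * X^(-(u/(n:ℝ))) < (t:ℝ)^(-v) := by
      have ht1 : (1:ℝ) ≤ (t:ℝ) := by exact_mod_cast ht0
      have htT' : (t:ℝ) ≤ T' := le_trans (by exact_mod_cast htT) hTT'
      have hstep : C₀ * X^(-(u/(n:ℝ))) < T'^(-v) := by
        rw [hT', Real.mul_rpow (by positivity) (by positivity)]
        rw [← Real.rpow_mul hX0.le]
        apply lt_of_exp_gap hX0 hC₀0 (Real.rpow_pos_of_pos (by positivity) _)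
        have hCD : C₀ / ((2:ℝ)^((n:ℕ)-1))^(-v) = A₁ := by
          rw [Real.rpow_neg (by positivity), div_eq_mul_inv, inv_inv, hA₁]
        have hexp : E' * (-v) - (-(u/(n:ℝ))) = γ/(n:ℝ) := by
          rw [hE', hγdef, hD]
          field_simp
          ring
        rw [hCD, hexp]
        exact hkey₁
      refine lt_of_lt_of_le hstep ?_
      exact rpow_neg_anti (by linarith) htT' hv0.le
    -- target (ii)
    have htarget2 : C₀ * X^(-(u/(n:ℝ))) < 1/((N:ℝ)+1) := by
      have hP : (0:ℝ) < X^(u/(n:ℝ)) := Real.rpow_pos_of_pos hX0 _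
      rw [Real.rpow_neg hX0.le, ← div_eq_mul_inv,
        div_lt_div_iff₀ hP (by positivity : (0:ℝ) < (N:ℝ)+1)]
      calc C₀ * ((N:ℝ)+1) = A₂ := by rw [hA₂]
        _ < X^(u/(n:ℝ)) := hkey₂
        _ = 1 * X^(u/(n:ℝ)) := (one_mul _).symm
    refine ⟨t, ⟨ht0, ?_⟩, ?_⟩
    · exact vnorm_lt fun i => lt_of_le_of_lt (hbound i) htarget1
    · exact vnorm_lt fun i => lt_of_le_of_lt (hbound i) htarget2
  rcases fiber_or (fun N => (hex N).choose) _ (fun N => (hex N).choose_spec.1) with h | ⟨t, ht, hfib⟩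
  · exact h
  · have hV : vnorm (fun i => (t:ℝ) * x i) = 0 := by
      refine eq_zero_of_infinite_small (vnorm_nonneg _) hfib fun N hN => ?_
      have h2 := (hex N).choose_spec.2
      have hNa : (hex N).choose = t := hN
      rwa [hNa] at h2
    refine Ssim_infinite_of_deg ht.1 (fun i => ?_) _
    have h1 := dnint_le_vnorm (fun i => (t:ℝ) * x i) i
    have h2 := dnint_nonneg ((t:ℝ) * x i)
    rw [hV] at h1
    linarith

end main3
/-- For every `x ∈ ℝⁿ`, `w₀(x) = 1/n` if and only if `w_{n-1}(x) = n`. -/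
theorem wsim_eq_iff_wdual_eq (n : ℕ) (hn : 0 < n) (x : Fin n → ℝ) :
    wsim n x = ((1 / (n : ℝ) : ℝ) : EReal) ↔ wdual n x = (((n : ℝ)) : EReal) := by
  haveI : NeZero n := ⟨hn.ne'⟩
  constructor
  · intro h
    apply le_antisymm
    · rw [wdual_eq]
      apply sSup_le
      rintro w ⟨u, rfl, hu⟩
      rw [EReal.coe_le_coe_iff]
      by_contra hgt
      push_neg at hgt
      obtain ⟨v, hv, hvinf⟩ := transfer2 x hgt hu
      have hle : ((v:ℝ) : EReal) ≤ wsim n x := by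
        rw [wsim_eq]; exact le_sSup ⟨v, rfl, hvinf⟩
      rw [h, EReal.coe_le_coe_iff] at hle
      linarith
    · rw [wdual_eq]
      exact le_sSup ⟨(n:ℝ), rfl, Sdual_crit_infinite x⟩
  · intro h
    apply le_antisymm
    · rw [wsim_eq]
      apply sSup_le
      rintro w ⟨v, rfl, hv⟩
      rw [EReal.coe_le_coe_iff]
      by_contra hgt
      push_neg at hgt
      obtain ⟨u, hu, huinf⟩ := transfer1 x hgt hv
      have hle : ((u:ℝ) : EReal) ≤ wdual n x := by
        rw [wdual_eq]; exact le_sSup ⟨u, rfl, huinf⟩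
      rw [h, EReal.coe_le_coe_iff] at hle
      linarith
    · rw [wsim_eq]
      exact le_sSup ⟨1/(n:ℝ), rfl, Ssim_crit_infinite x⟩
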